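/- Let s > 0, a > 0, I ≥ 0 and 0 < β < 1 + 2(I + a)/s. Then the second derivative at I of the function J ↦ (1 + s/(J + a))^(−β) is strictly negative. -/

import Mathlib

lemma aux_hasDerivAt (s a β : ℝ) (hs : 0 < s) {J : ℝ} (hJ : 0 < J + a) :
    HasDerivAt (fun J : ℝ => (1 + s / (J + a)) ^ (-β))
      (β * s * (((J + a) ^ 2)⁻¹ * (1 + s / (J + a)) ^ (-β - 1))) J := by
  have hne : J + a ≠ 0 := ne_of_gt hJ
  have hu : (0:ℝ) < 1 + s / (J + a) := by positivity
  have hd : HasDerivAt (fun J : ℝ => 1 + s / (J + a))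
      ((0 * (J + a) - s * 1) / (J + a) ^ 2) J := by
    exact ((hasDerivAt_const J s).div ((hasDerivAt_id J).add_const a) hne).const_add 1
  have := hd.rpow_const (p := -β) (Or.inl hu.ne')
  convert this using 1
  set X := (1 + s / (J + a)) ^ (-β - 1) with hX
  simp only [div_eq_mul_inv]
  ring

theorem second_deriv_neg (s a β I : ℝ) (hs : 0 < s) (ha : 0 < a) (hI : 0 ≤ I)
    (hβ0 : 0 < β) (hβ1 : β < 1 + 2 * (I + a) / s) :
    iteratedDeriv 2 (fun J : ℝ => (1 + s / (J + a)) ^ (-β)) I < 0 := by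
  set f : ℝ → ℝ := fun J => (1 + s / (J + a)) ^ (-β) with hf
  set g : ℝ → ℝ := fun J => β * s * (((J + a) ^ 2)⁻¹ * (1 + s / (J + a)) ^ (-β - 1)) with hg
  have hIa : 0 < I + a := by linarith
  have hmem : ∀ᶠ J in nhds I, -a < J :=
    eventually_gt_nhds (by linarith)
  -- deriv f = g near I
  have hdf : deriv f =ᶠ[nhds I] g := by
    filter_upwards [hmem] with J hJ
    exact (aux_hasDerivAt s a β hs (by linarith)).deriv
  have h2 : iteratedDeriv 2 f I = deriv (deriv f) I := by
    simp [iteratedDeriv_succ, iteratedDeriv_zero]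
  rw [h2, hdf.deriv_eq]
  -- derivative of g at I
  have hne : I + a ≠ 0 := ne_of_gt hIa
  have hu : (0:ℝ) < 1 + s / (I + a) := by positivity
  have h1 : HasDerivAt (fun J : ℝ => ((J + a) ^ 2)⁻¹)
      (-(2 * (I + a) ^ 1 * 1) / ((I + a) ^ 2) ^ 2) I :=
    (((hasDerivAt_id I).add_const a).pow 2).inv (pow_ne_zero 2 hne)
  have hd : HasDerivAt (fun J : ℝ => 1 + s / (J + a))
      ((0 * (I + a) - s * 1) / (I + a) ^ 2) I :=
    ((hasDerivAt_const I s).div ((hasDerivAt_id I).add_const a) hne).const_add 1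
  have h3 : HasDerivAt (fun J : ℝ => (1 + s / (J + a)) ^ (-β - 1))
      ((0 * (I + a) - s * 1) / (I + a) ^ 2 * (-β - 1) * (1 + s / (I + a)) ^ (-β - 1 - 1)) I :=
    hd.rpow_const (Or.inl hu.ne')
  have hgd : HasDerivAt g
      (β * s * ((-(2 * (I + a) ^ 1 * 1) / ((I + a) ^ 2) ^ 2) * (1 + s / (I + a)) ^ (-β - 1)
        + ((I + a) ^ 2)⁻¹ * ((0 * (I + a) - s * 1) / (I + a) ^ 2 * (-β - 1)
            * (1 + s / (I + a)) ^ (-β - 1 - 1)))) I := by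
    exact (h1.mul h3).const_mul (β * s)
  rw [hgd.deriv]
  -- now show the value is negative
  have hsplit : (1 + s / (I + a)) ^ (-β - 1)
      = (1 + s / (I + a)) ^ (-β - 1 - 1) * (1 + s / (I + a)) := by
    have h := Real.rpow_add hu (-β - 1 - 1) 1
    rw [Real.rpow_one, show -β - 1 - 1 + 1 = -β - 1 by ring] at h
    exact h
  rw [hsplit]
  have hupos : (0:ℝ) < (1 + s / (I + a)) ^ (-β - 1 - 1) := Real.rpow_pos_of_pos hu _
  set U := (1 + s / (I + a)) ^ (-β - 1 - 1) with hU
  have key : β * s * ((-(2 * (I + a) ^ 1 * 1) / ((I + a) ^ 2) ^ 2) * (U * (1 + s / (I + a)))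
        + ((I + a) ^ 2)⁻¹ * ((0 * (I + a) - s * 1) / (I + a) ^ 2 * (-β - 1) * U))
      = β * s * U / (I + a) ^ 4 * ((β - 1) * s - 2 * (I + a)) := by
    field_simp
    ring
  rw [key]
  have hbr : (β - 1) * s - 2 * (I + a) < 0 := by
    have : (β - 1) * s < 2 * (I + a) := by
      have := (sub_lt_iff_lt_add').mpr hβ1
      calc (β - 1) * s < (2 * (I + a) / s) * s := by
            apply mul_lt_mul_of_pos_right _ hs; linarith
        _ = 2 * (I + a) := by field_simp
    linarith
  have hpos : 0 < β * s * U / (I + a) ^ 4 := by positivity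
  exact mul_neg_of_pos_of_neg hpos hbr
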